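/- arXiv:1702.03750 — 3 statements merged into one kernel-verified Lean document; each statement's English description precedes it below -/
import Mathlib

section
/- Let n ≥ 2, d ≥ 1, and let A : (Fin d → Fin n) → ℝ be a symmetric d-th order tensor. Define f(Q) := Σ_{j=1}^n (W(Q)(j,…,j))², where W(Q)(i₁,…,i_d) := Σ_{p₁,…,p_d} A(p₁,…,p_d) Q_{p₁ i₁} ⋯ Q_{p_d i_d}. Then for every Q ∈ SO(n) and every pair 1 ≤ i < j ≤ n, there exists a real polynomial ρ of degree at most 2d such that for all x ∈ ℝ: f(Q G(i,j, arctan x)) = ρ(x) / (1 + x²)^d. -/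
open Matrix Real Filter Set

attribute [local instance] Matrix.frobeniusNormedAddCommGroup Matrix.frobeniusNormedSpace

noncomputable def frobInner {n : ℕ} (A B : Matrix (Fin n) (Fin n) ℝ) : ℝ :=
  ∑ i, ∑ j, A i j * B i j

noncomputable def frobNorm {n : ℕ} (A : Matrix (Fin n) (Fin n) ℝ) : ℝ :=
  Real.sqrt (∑ i, ∑ j, (A i j) ^ 2)

def SOn (n : ℕ) : Set (Matrix (Fin n) (Fin n) ℝ) := {Q | Qᵀ * Q = 1 ∧ Q.det = 1}

noncomputable def grad {n : ℕ} (f : Matrix (Fin n) (Fin n) ℝ → ℝ)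
    (Q : Matrix (Fin n) (Fin n) ℝ) : Matrix (Fin n) (Fin n) ℝ :=
  Matrix.of fun k l => fderiv ℝ f Q (Matrix.single k l 1)

noncomputable def Lam {n : ℕ} (f : Matrix (Fin n) (Fin n) ℝ → ℝ)
    (Q : Matrix (Fin n) (Fin n) ℝ) : Matrix (Fin n) (Fin n) ℝ :=
  (1 / 2 : ℝ) • (Qᵀ * grad f Q - (grad f Q)ᵀ * Q)

noncomputable def projGrad {n : ℕ} (f : Matrix (Fin n) (Fin n) ℝ → ℝ)
    (Q : Matrix (Fin n) (Fin n) ℝ) : Matrix (Fin n) (Fin n) ℝ := Q * Lam f Q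

noncomputable def givens {n : ℕ} (i j : Fin n) (θ : ℝ) : Matrix (Fin n) (Fin n) ℝ :=
  Matrix.of fun k l =>
    if k = i ∧ l = i then Real.cos θ
    else if k = j ∧ l = j then Real.cos θ
    else if k = j ∧ l = i then Real.sin θ
    else if k = i ∧ l = j then -Real.sin θ
    else if k = l then 1 else 0

def deltaMat {n : ℕ} (i j : Fin n) : Matrix (Fin n) (Fin n) ℝ :=
  Matrix.of fun k l => if k = j ∧ l = i then 1 else if k = i ∧ l = j then -1 else 0

theorem stmt_16 {n d : ℕ} (hn : 2 ≤ n) (hd : 1 ≤ d) (A : (Fin d → Fin n) → ℝ)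
    (hsym : ∀ (p : Fin d → Fin n) (σ : Equiv.Perm (Fin d)), A (p ∘ σ) = A p)
    (f : Matrix (Fin n) (Fin n) ℝ → ℝ)
    (hf : ∀ Q, f Q = ∑ j, (∑ p : Fin d → Fin n, A p * ∏ k, Q (p k) j) ^ 2)
    (Q : Matrix (Fin n) (Fin n) ℝ) (hQ : Q ∈ SOn n)
    (i j : Fin n) (hij : i < j) :
    ∃ ρ : Polynomial ℝ, ρ.natDegree ≤ 2 * d ∧
      ∀ x : ℝ, f (Q * givens i j (Real.arctan x)) = ρ.eval x / (1 + x ^ 2) ^ d := by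
  classical
  have hne : i ≠ j := hij.ne
  set e : Fin n → Fin n → Polynomial ℝ := fun k c =>
    if c = i then Polynomial.C (Q k i) + Polynomial.C (Q k j) * Polynomial.X
    else if c = j then Polynomial.C (Q k j) - Polynomial.C (Q k i) * Polynomial.X
    else Polynomial.C (Q k c) with he
  set N : Fin n → Polynomial ℝ :=
    fun c => ∑ p : Fin d → Fin n, Polynomial.C (A p) * ∏ k, e (p k) c with hN
  have hedeg : ∀ k c, (e k c).natDegree ≤ 1 := by
    intro k c
    by_cases h1 : c = i
    · simp only [he, if_pos h1]
      refine le_trans (Polynomial.natDegree_add_le _ _) ?_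
      simp only [Polynomial.natDegree_C]
      refine max_le (by norm_num) (le_trans (Polynomial.natDegree_mul_le) ?_)
      simp [Polynomial.natDegree_X_le]
    by_cases h2 : c = j
    · simp only [he, if_neg h1, if_pos h2]
      refine le_trans (Polynomial.natDegree_sub_le _ _) ?_
      simp only [Polynomial.natDegree_C]
      refine max_le (by norm_num) (le_trans (Polynomial.natDegree_mul_le) ?_)
      simp [Polynomial.natDegree_X_le]
    · simp [he, h1, h2]
  have hNdeg : ∀ c, (N c).natDegree ≤ d := by
    intro c
    refine Polynomial.natDegree_sum_le_of_forall_le _ _ ?_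
    intro p _
    refine le_trans Polynomial.natDegree_mul_le ?_
    simp only [Polynomial.natDegree_C, zero_add]
    refine le_trans (Polynomial.natDegree_prod_le _ _) ?_
    calc ∑ k : Fin d, (e (p k) c).natDegree ≤ ∑ _k : Fin d, 1 :=
          Finset.sum_le_sum fun k _ => hedeg _ _
      _ = d := by simp
  have hNC : ∀ c, c ≠ i → c ≠ j → (N c).natDegree = 0 := by
    intro c h1 h2
    have hcc : N c = Polynomial.C (∑ p : Fin d → Fin n, A p * ∏ k, Q (p k) c) := by
      simp only [hN, he, if_neg h1, if_neg h2]
      rw [map_sum]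
      refine Finset.sum_congr rfl fun p _ => ?_
      rw [_root_.map_mul, map_prod]
    rw [hcc, Polynomial.natDegree_C]
  refine ⟨∑ c, (N c) ^ 2 * (if c = i ∨ c = j then 1 else (1 + Polynomial.X ^ 2) ^ d), ?_, ?_⟩
  · refine Polynomial.natDegree_sum_le_of_forall_le _ _ ?_
    intro c _
    refine le_trans Polynomial.natDegree_mul_le ?_
    by_cases hc : c = i ∨ c = j
    · simp only [if_pos hc, Polynomial.natDegree_one, add_zero]
      refine le_trans (Polynomial.natDegree_pow_le) ?_
      exact Nat.mul_le_mul_left 2 (hNdeg c)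
    · push_neg at hc
      obtain ⟨h1, h2⟩ := hc
      rw [if_neg (by tauto)]
      have h0 : ((N c) ^ 2).natDegree ≤ 0 :=
        le_trans Polynomial.natDegree_pow_le (by rw [hNC c h1 h2])
      have hp : ((1 + Polynomial.X ^ 2 : Polynomial ℝ) ^ d).natDegree ≤ 2 * d := by
        refine le_trans Polynomial.natDegree_pow_le ?_
        have h2' : (1 + Polynomial.X ^ 2 : Polynomial ℝ).natDegree ≤ 2 := by
          refine le_trans (Polynomial.natDegree_add_le _ _) ?_
          simp [Polynomial.natDegree_X_pow]
        calc d * _ ≤ d * 2 := Nat.mul_le_mul_left d h2'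
          _ = 2 * d := Nat.mul_comm d 2
      omega
  · intro x
    set θ := Real.arctan x with hθ
    set s := Real.sqrt (1 + x ^ 2) with hs
    have hx : (0 : ℝ) < 1 + x ^ 2 := by positivity
    have hs2 : s ^ 2 = 1 + x ^ 2 := Real.sq_sqrt hx.le
    have hs0 : s ≠ 0 := by
      rw [hs]; exact (Real.sqrt_pos.mpr hx).ne'
    set M := Q * givens i j θ with hM
    have hMentry : ∀ (k c : Fin n),
        M k c = if c = i ∨ c = j then (e k c).eval x / s else Q k c := by
      intro k c
      rw [hM, Matrix.mul_apply]
      by_cases h1 : c = i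
      · have key : ∀ m : Fin n, Q k m * givens i j θ m c =
            (if m = i then Q k i * Real.cos θ else 0) +
            (if m = j then Q k j * Real.sin θ else 0) := by
          intro m
          simp only [givens, Matrix.of_apply, h1]
          by_cases hm1 : m = i
          · simp [hm1, hne, hne.symm]
          · by_cases hm2 : m = j
            · simp [hm1, hm2, hne, hne.symm]
            · simp [hm1, hm2]
        rw [Finset.sum_congr rfl fun m _ => key m, Finset.sum_add_distrib]
        simp only [Finset.sum_ite_eq', Finset.mem_univ, if_true]
        rw [if_pos (Or.inl h1)]
        simp only [he, h1, if_pos rfl, Polynomial.eval_add, Polynomial.eval_mul,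
          Polynomial.eval_C, Polynomial.eval_X]
        rw [hθ, Real.cos_arctan, Real.sin_arctan, ← hs]
        field_simp
      by_cases h2 : c = j
      · have key : ∀ m : Fin n, Q k m * givens i j θ m c =
            (if m = i then Q k i * (-Real.sin θ) else 0) +
            (if m = j then Q k j * Real.cos θ else 0) := by
          intro m
          simp only [givens, Matrix.of_apply, h2]
          by_cases hm1 : m = i
          · simp [hm1, hne, hne.symm]
          · by_cases hm2 : m = j
            · simp [hm1, hm2, hne, hne.symm]
            · simp [hm1, hm2]
        rw [Finset.sum_congr rfl fun m _ => key m, Finset.sum_add_distrib]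
        simp only [Finset.sum_ite_eq', Finset.mem_univ, if_true]
        rw [if_pos (Or.inr h2)]
        simp only [he, h2, if_neg (show ¬ j = i from hne.symm), if_pos rfl, ↓reduceIte,
          Polynomial.eval_sub, Polynomial.eval_mul, Polynomial.eval_C, Polynomial.eval_X]
        rw [hθ, Real.cos_arctan, Real.sin_arctan, ← hs]
        field_simp
        ring
      · have key : ∀ m : Fin n, Q k m * givens i j θ m c =
            if m = c then Q k c else 0 := by
          intro m
          simp only [givens, Matrix.of_apply]
          by_cases hm : m = c
          · simp [hm, h1, h2]
          · by_cases hm1 : m = i <;> by_cases hm2 : m = j <;>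
              simp [hm, hm1, hm2, h1, h2, Ne.symm h1, Ne.symm h2]
        rw [Finset.sum_congr rfl fun m _ => key m]
        simp [h1, h2]
    have hevalN : ∀ c, (N c).eval x =
        ∑ p : Fin d → Fin n, A p * ∏ k, (e (p k) c).eval x := by
      intro c
      simp only [hN]
      simp only [Polynomial.eval_finset_sum, Polynomial.eval_mul, Polynomial.eval_C,
        Polynomial.eval_prod]
    rw [hf]
    rw [Polynomial.eval_finset_sum, Finset.sum_div]
    refine Finset.sum_congr rfl fun c _ => ?_
    by_cases hc : c = i ∨ c = j
    · have hcol : ∀ p : Fin d → Fin n,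
          (∏ k, M (p k) c) = (∏ k, (e (p k) c).eval x) / s ^ d := by
        intro p
        rw [Finset.prod_congr rfl fun k _ => hMentry (p k) c]
        simp only [if_pos hc]
        rw [Finset.prod_div_distrib, Finset.prod_const]
        simp
      have hsum : (∑ p : Fin d → Fin n, A p * ∏ k, M (p k) c) = (N c).eval x / s ^ d := by
        rw [hevalN, Finset.sum_div]
        refine Finset.sum_congr rfl fun p _ => ?_
        rw [hcol p, mul_div_assoc]
      rw [hsum, div_pow, ← pow_mul, mul_comm d 2, pow_mul, hs2]
      rw [Polynomial.eval_mul, if_pos hc]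
      simp
    · have hsum : (∑ p : Fin d → Fin n, A p * ∏ k, M (p k) c) = (N c).eval x := by
        rw [hevalN]
        refine Finset.sum_congr rfl fun p _ => ?_
        congr 1
        refine Finset.prod_congr rfl fun k _ => ?_
        rw [hMentry (p k) c, if_neg hc]
        push_neg at hc
        simp [he, hc.1, hc.2]
      rw [hsum, if_neg hc]
      rw [Polynomial.eval_mul, Polynomial.eval_pow]
      simp only [Polynomial.eval_add, Polynomial.eval_one, Polynomial.eval_pow,
        Polynomial.eval_X]
      rw [mul_div_assoc, div_self (by positivity), mul_one]
end

section
/- Let n ≥ 2, let W ∈ ℝ^{n×n×n} be a symmetric third-order tensor, and let δ₀ ∈ ℝ. Define T(θ)_{abc} := Σ_{p,q,r} W_{pqr} G_{pa} G_{qb} G_{rc} with G = G(1,2,θ), h(θ) := Σ_{j=1}^n T(θ)_{jjj}², and τ̃(x) := h(arctan x) − 2 δ₀ x² / (1 + x²)². Set a := 6 (W_{111} W_{112} − W_{122} W_{222}) and b := 6 (W_{111}² + W_{222}² − 3 W_{112}² − 3 W_{122}² − 2 W_{111} W_{122} − 2 W_{112} W_{222}) + 4 δ₀. Then for all x ∈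 ℝ: (1 + x²)⁴ · τ̃'(x) = a (1 − 5x² − 5x⁴ + x⁶) + b (x⁵ − x); moreover, for all x ≠ 0, this quantity equals x² (1 + x²) (a ξ² + b ξ − 4a) where ξ = x − 1/x. -/
open Matrix Real Filter Set

attribute [local instance] Matrix.frobeniusNormedAddCommGroup Matrix.frobeniusNormedSpace

set_option linter.unreachableTactic false
set_option linter.unnecessarySeqFocus false

lemma coli {n : ℕ} {i j : Fin n} (hij : i ≠ j) (θ : ℝ) (p : Fin n) :
    givens i j θ p i = Real.cos θ * (if p = i then 1 else 0)
      + Real.sin θ * (if p = j then 1 else 0) := by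
  rcases eq_or_ne p i with rfl | hpi
  · simp [givens, hij, hij.symm]
  · rcases eq_or_ne p j with rfl | hpj
    · simp [givens, hij, hij.symm]
    · simp [givens, hpi, hpj, hij.symm]

lemma colj {n : ℕ} {i j : Fin n} (hij : i ≠ j) (θ : ℝ) (p : Fin n) :
    givens i j θ p j = (-Real.sin θ) * (if p = i then 1 else 0)
      + Real.cos θ * (if p = j then 1 else 0) := by
  rcases eq_or_ne p i with rfl | hpi
  · simp [givens, hij, hij.symm]
  · rcases eq_or_ne p j with rfl | hpj
    · simp [givens, hij, hij.symm]
    · simp [givens, hpi, hpj, hij]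

lemma cols {n : ℕ} {i j : Fin n} (θ : ℝ) (s : Fin n) (hsi : s ≠ i) (hsj : s ≠ j)
    (p : Fin n) : givens i j θ p s = if p = s then 1 else 0 := by
  simp [givens, hsi, hsj, hsi.symm]

lemma tri {n : ℕ} (i j : Fin n) (W : Fin n → Fin n → Fin n → ℝ)
    (g : Fin n → ℝ) (α β : ℝ)
    (hg : ∀ p, g p = α * (if p = i then 1 else 0) + β * (if p = j then 1 else 0)) :
    ∑ p, ∑ q, ∑ r, W p q r * g p * g q * g r =
      W i i i * α^3 + W i i j * (α^2*β) + W i j i * (α^2*β) + W j i i * (α^2*β)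
      + W i j j * (α*β^2) + W j i j * (α*β^2) + W j j i * (α*β^2) + W j j j * β^3 := by
  simp only [hg]
  simp only [mul_add, add_mul, mul_ite, ite_mul, mul_one, mul_zero, zero_mul, one_mul,
    Finset.sum_add_distrib, Finset.sum_ite_eq', Finset.mem_univ, if_true]
  ring

lemma trid {n : ℕ} {i j : Fin n} (θ : ℝ) (s : Fin n) (hsi : s ≠ i) (hsj : s ≠ j)
    (W : Fin n → Fin n → Fin n → ℝ) :
    ∑ p, ∑ q, ∑ r, W p q r * givens i j θ p s * givens i j θ q s * givens i j θ r s
      = W s s s := by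
  simp only [cols θ s hsi hsj]
  simp [mul_ite, ite_mul, mul_one, mul_zero, zero_mul, Finset.sum_ite_eq', Finset.mem_univ]

lemma myderiv (w0 w1 w2 w3 C δ₀ : ℝ) (x : ℝ) :
    HasDerivAt (fun y : ℝ =>
      ((w0+3*w1*y+3*w2*y^2+w3*y^3)^2 + (w3-3*w2*y+3*w1*y^2-w0*y^3)^2)/(1+y^2)^3 + C
        - 2*δ₀*y^2/(1+y^2)^2)
    (((2*(w0+3*w1*x+3*w2*x^2+w3*x^3)*(3*w1+6*w2*x+3*w3*x^2)
        + 2*(w3-3*w2*x+3*w1*x^2-w0*x^3)*(-3*w2+6*w1*x-3*w0*x^2))*(1+x^2)^3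
      - ((w0+3*w1*x+3*w2*x^2+w3*x^3)^2 + (w3-3*w2*x+3*w1*x^2-w0*x^3)^2)*(6*x*(1+x^2)^2))
        /((1+x^2)^3)^2
     - (4*δ₀*x*(1+x^2)^2 - 2*δ₀*x^2*(4*x*(1+x^2)))/((1+x^2)^2)^2) x := by
  have hu3 : ((1:ℝ)+x^2)^3 ≠ 0 := by positivity
  have hu2 : ((1:ℝ)+x^2)^2 ≠ 0 := by positivity
  have hU : HasDerivAt (fun y:ℝ => 1 + y^2) (2*x) x := by
    simpa using (hasDerivAt_pow 2 x).const_add 1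
  have hU3 : HasDerivAt (fun y:ℝ => (1+y^2)^3) (6*x*(1+x^2)^2) x := by
    have := hU.pow 3
    exact this.congr_deriv (by push_cast; ring)
  have hU2 : HasDerivAt (fun y:ℝ => (1+y^2)^2) (4*x*(1+x^2)) x := by
    have := hU.pow 2
    exact this.congr_deriv (by push_cast; ring)
  have hP : HasDerivAt (fun y:ℝ => w0+3*w1*y+3*w2*y^2+w3*y^3) (3*w1+6*w2*x+3*w3*x^2) x := by
    have := (((hasDerivAt_const x w0).add ((hasDerivAt_id x).const_mul (3*w1))).add
      ((hasDerivAt_pow 2 x).const_mul (3*w2))).add ((hasDerivAt_pow 3 x).const_mul w3)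
    exact this.congr_deriv (by push_cast; ring)
  have hQ : HasDerivAt (fun y:ℝ => w3-3*w2*y+3*w1*y^2-w0*y^3) (-3*w2+6*w1*x-3*w0*x^2) x := by
    have := (((hasDerivAt_const x w3).sub ((hasDerivAt_id x).const_mul (3*w2))).add
      ((hasDerivAt_pow 2 x).const_mul (3*w1))).sub ((hasDerivAt_pow 3 x).const_mul w0)
    exact this.congr_deriv (by push_cast; ring)
  have hN : HasDerivAt (fun y:ℝ => (w0+3*w1*y+3*w2*y^2+w3*y^3)^2 + (w3-3*w2*y+3*w1*y^2-w0*y^3)^2)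
      (2*(w0+3*w1*x+3*w2*x^2+w3*x^3)*(3*w1+6*w2*x+3*w3*x^2)
        + 2*(w3-3*w2*x+3*w1*x^2-w0*x^3)*(-3*w2+6*w1*x-3*w0*x^2)) x := by
    have := (hP.pow 2).add (hQ.pow 2)
    exact this.congr_deriv (by push_cast; ring)
  have hnum : HasDerivAt (fun y:ℝ => 2*δ₀*y^2) (4*δ₀*x) x := by
    have := (hasDerivAt_pow 2 x).const_mul (2*δ₀)
    exact this.congr_deriv (by push_cast; ring)
  have h1 := (hN.div hU3 hu3).add_const C
  have h2 := hnum.div hU2 hu2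
  have := h1.sub h2
  exact this.congr_deriv (by ring)

lemma trigsub (w0 w1 w2 w3 : ℝ) (x : ℝ) :
    (w0 * Real.cos (Real.arctan x) ^ 3 + 3*w1*(Real.cos (Real.arctan x)^2 * Real.sin (Real.arctan x))
      + 3*w2*(Real.cos (Real.arctan x) * Real.sin (Real.arctan x)^2) + w3 * Real.sin (Real.arctan x)^3)^2
    + (w3*Real.cos (Real.arctan x)^3 - 3*w2*(Real.cos (Real.arctan x)^2*Real.sin (Real.arctan x))
      + 3*w1*(Real.cos (Real.arctan x)*Real.sin (Real.arctan x)^2) - w0*Real.sin (Real.arctan x)^3)^2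
    = ((w0+3*w1*x+3*w2*x^2+w3*x^3)^2 + (w3-3*w2*x+3*w1*x^2-w0*x^3)^2)/(1+x^2)^3 := by
  have hpos : (0:ℝ) < 1 + x^2 := by positivity
  have ht : Real.sqrt (1+x^2)^2 = 1+x^2 := Real.sq_sqrt hpos.le
  have hc2 : (1/Real.sqrt (1+x^2))^2 = 1/(1+x^2) := by rw [div_pow, one_pow, ht]
  rw [Real.cos_arctan, Real.sin_arctan]
  calc (w0*(1/Real.sqrt (1+x^2))^3 + 3*w1*((1/Real.sqrt (1+x^2))^2*(x/Real.sqrt (1+x^2)))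
      + 3*w2*((1/Real.sqrt (1+x^2))*(x/Real.sqrt (1+x^2))^2) + w3*(x/Real.sqrt (1+x^2))^3)^2
    + (w3*(1/Real.sqrt (1+x^2))^3 - 3*w2*((1/Real.sqrt (1+x^2))^2*(x/Real.sqrt (1+x^2)))
      + 3*w1*((1/Real.sqrt (1+x^2))*(x/Real.sqrt (1+x^2))^2) - w0*(x/Real.sqrt (1+x^2))^3)^2
      = ((w0+3*w1*x+3*w2*x^2+w3*x^3)^2 + (w3-3*w2*x+3*w1*x^2-w0*x^3)^2)
          * ((1/Real.sqrt (1+x^2))^2)^3 := by ring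
  _ = ((w0+3*w1*x+3*w2*x^2+w3*x^3)^2 + (w3-3*w2*x+3*w1*x^2-w0*x^3)^2) * (1/(1+x^2))^3 := by
      rw [hc2]
  _ = ((w0+3*w1*x+3*w2*x^2+w3*x^3)^2 + (w3-3*w2*x+3*w1*x^2-w0*x^3)^2)/(1+x^2)^3 := by
      rw [div_pow, one_pow, mul_one_div]


theorem stmt_17 {n : ℕ} (hn : 2 ≤ n) (W : Fin n → Fin n → Fin n → ℝ)
    (hsym1 : ∀ p q r, W p q r = W q p r) (hsym2 : ∀ p q r, W p q r = W p r q)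
    (δ₀ : ℝ)
    (i j : Fin n) (hi : (i : ℕ) = 0) (hj : (j : ℕ) = 1)
    (h : ℝ → ℝ)
    (hh : ∀ θ, h θ = ∑ s, (∑ p, ∑ q, ∑ r, W p q r *
      givens i j θ p s * givens i j θ q s * givens i j θ r s) ^ 2)
    (τ : ℝ → ℝ)
    (hτ : ∀ x, τ x = h (Real.arctan x) - 2 * δ₀ * x ^ 2 / (1 + x ^ 2) ^ 2)
    (a b : ℝ)
    (ha : a = 6 * (W i i i * W i i j - W i j j * W j j j))
    (hb : b = 6 * ((W i i i) ^ 2 + (W j j j) ^ 2 - 3 * (W i i j) ^ 2 - 3 * (W i j j) ^ 2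
      - 2 * W i i i * W i j j - 2 * W i i j * W j j j) + 4 * δ₀) :
    (∀ x : ℝ, (1 + x ^ 2) ^ 4 * deriv τ x =
      a * (1 - 5 * x ^ 2 - 5 * x ^ 4 + x ^ 6) + b * (x ^ 5 - x)) ∧
    (∀ x : ℝ, x ≠ 0 →
      a * (1 - 5 * x ^ 2 - 5 * x ^ 4 + x ^ 6) + b * (x ^ 5 - x) =
        x ^ 2 * (1 + x ^ 2) * (a * (x - 1 / x) ^ 2 + b * (x - 1 / x) - 4 * a)) := by
  have hij : i ≠ j := by
    intro hE
    rw [hE] at hi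
    omega
  have e1 : W i j i = W i i j := hsym2 i j i
  have e2 : W j i i = W i i j := by rw [hsym1 j i i, e1]
  have e3 : W j i j = W i j j := hsym1 j i j
  have e4 : W j j i = W i j j := by rw [hsym2 j j i, e3]
  set C := ∑ s ∈ (Finset.univ.erase i).erase j, (W s s s)^2 with hC
  have hsplit : ∀ θ : ℝ, h θ =
      (W i i i * Real.cos θ ^ 3 + 3*(W i i j)*(Real.cos θ^2 * Real.sin θ)
        + 3*(W i j j)*(Real.cos θ * Real.sin θ^2) + W j j j * Real.sin θ^3)^2
      + (W j j j * Real.cos θ^3 - 3*(W i j j)*(Real.cos θ^2*Real.sin θ)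
        + 3*(W i i j)*(Real.cos θ*Real.sin θ^2) - W i i i * Real.sin θ^3)^2 + C := by
    intro θ
    rw [hh]
    have hmemj : j ∈ Finset.univ.erase i :=
      Finset.mem_erase.mpr ⟨hij.symm, Finset.mem_univ j⟩
    rw [← Finset.add_sum_erase _ _ (Finset.mem_univ i),
        ← Finset.add_sum_erase _ _ hmemj]
    have Ti : (∑ p, ∑ q, ∑ r, W p q r * givens i j θ p i * givens i j θ q i
        * givens i j θ r i) =
        W i i i * Real.cos θ^3 + W i i j * (Real.cos θ^2*Real.sin θ)
        + W i j i * (Real.cos θ^2*Real.sin θ) + W j i i * (Real.cos θ^2*Real.sin θ)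
        + W i j j * (Real.cos θ*Real.sin θ^2) + W j i j * (Real.cos θ*Real.sin θ^2)
        + W j j i * (Real.cos θ*Real.sin θ^2) + W j j j * Real.sin θ^3 :=
      tri i j W _ (Real.cos θ) (Real.sin θ) (coli hij θ)
    have Tj : (∑ p, ∑ q, ∑ r, W p q r * givens i j θ p j * givens i j θ q j
        * givens i j θ r j) =
        W i i i * (-Real.sin θ)^3 + W i i j * ((-Real.sin θ)^2*Real.cos θ)
        + W i j i * ((-Real.sin θ)^2*Real.cos θ) + W j i i * ((-Real.sin θ)^2*Real.cos θ)
        + W i j j * ((-Real.sin θ)*Real.cos θ^2) + W j i j * ((-Real.sin θ)*Real.cos θ^2)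
        + W j j i * ((-Real.sin θ)*Real.cos θ^2) + W j j j * Real.cos θ^3 :=
      tri i j W _ (-Real.sin θ) (Real.cos θ) (colj hij θ)
    have hrest : (∑ s ∈ (Finset.univ.erase i).erase j,
        (∑ p, ∑ q, ∑ r, W p q r * givens i j θ p s * givens i j θ q s
          * givens i j θ r s) ^ 2) = C := by
      rw [hC]
      refine Finset.sum_congr rfl fun s hs => ?_
      obtain ⟨hsj, hs'⟩ := Finset.mem_erase.mp hs
      obtain ⟨hsi, -⟩ := Finset.mem_erase.mp hs'
      rw [trid θ s hsi hsj W]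
    rw [Ti, Tj, hrest, e1, e2, e3, e4]
    ring
  have hkey : τ = fun x : ℝ =>
      (((W i i i+3*(W i i j)*x+3*(W i j j)*x^2+(W j j j)*x^3)^2
        + ((W j j j)-3*(W i j j)*x+3*(W i i j)*x^2-(W i i i)*x^3)^2)/(1+x^2)^3 + C)
      - 2*δ₀*x^2/(1+x^2)^2 := by
    funext x
    rw [hτ x, hsplit (Real.arctan x),
      trigsub (W i i i) (W i i j) (W i j j) (W j j j) x]
  constructor
  · intro x
    have hd := myderiv (W i i i) (W i i j) (W i j j) (W j j j) C δ₀ x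
    have hder : deriv τ x =
      (((2*(W i i i+3*(W i i j)*x+3*(W i j j)*x^2+(W j j j)*x^3)*(3*(W i i j)+6*(W i j j)*x+3*(W j j j)*x^2)
          + 2*((W j j j)-3*(W i j j)*x+3*(W i i j)*x^2-(W i i i)*x^3)*(-3*(W i j j)+6*(W i i j)*x-3*(W i i i)*x^2))*(1+x^2)^3
        - ((W i i i+3*(W i i j)*x+3*(W i j j)*x^2+(W j j j)*x^3)^2
          + ((W j j j)-3*(W i j j)*x+3*(W i i j)*x^2-(W i i i)*x^3)^2)*(6*x*(1+x^2)^2))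
          /((1+x^2)^3)^2
       - (4*δ₀*x*(1+x^2)^2 - 2*δ₀*x^2*(4*x*(1+x^2)))/((1+x^2)^2)^2) := by
      rw [hkey]
      exact hd.deriv
    rw [hder, ha, hb]
    have h1 : ((1:ℝ)+x^2) ≠ 0 := by positivity
    field_simp
    ring
  · intro x hx
    field_simp
    ring
end

section
/- Let n ≥ 2, let W ∈ ℝ^{n×n×n×n} be a symmetric fourth-order tensor, and let δ₀ ∈ ℝ. Define T(θ)_{abcd} := Σ_{p,q,r,s} W_{pqrs} G_{pa} G_{qb} G_{rc} G_{sd} with G = G(1,2,θ), h(θ) := Σ_{j=1}^n T(θ)_{jjjj}², and τ̃(x) := h(arctan x) − 2 δ₀ x² / (1 + x²)². Set a := 8(W_{1111}W_{1112} − W_{1222}W_{2222}); b := 8(W_{1111}² − 3W_{1122}W_{1111} − 4W_{1112}² − 4W_{1222}² + W_{2222}² − 3W_{1122}W_{2222}) + 4δ₀; c := 8(18W_{1112}W_{1122} − 7W_{1111}W_{1112} + 3W_{1111}W_{1222} − 18W_{1122}W_{1222} − 3W_{1112}W_{2222} + 7W_{1222}W_{2222}); d := 8(9W_{1111}W_{1122}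 − 32W_{1112}W_{1222} − 2W_{1111}W_{2222} + 9W_{1122}W_{2222} + 12W_{1112}² − 36W_{1122}² + 12W_{1222}²) + 4δ₀; e := 80(6W_{1122}W_{1222} − W_{1111}W_{1222} − 6W_{1112}W_{1122} + W_{1112}W_{2222}). Then for all x ∈ ℝ: (1 + x²)⁵ · τ̃'(x) = a(x⁸ + 1) + b(x⁷ − x) + c(x⁶ + x²) + d(x⁵ − x³) + e x⁴; moreover, for all x ≠ 0, this quantity equals x⁴ (a ξ⁴ + b ξ³ + (4a + c) ξ² + (3b + d) ξ + 2a + 2c + e) where ξ = x − 1/x. -/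
open Matrix Real Filter Set

attribute [local instance] Matrix.frobeniusNormedAddCommGroup Matrix.frobeniusNormedSpace

set_option maxHeartbeats 1000000 in
theorem stmt_18 {n : ℕ} (hn : 2 ≤ n) (W : Fin n → Fin n → Fin n → Fin n → ℝ)
    (hsym1 : ∀ p q r s, W p q r s = W q p r s)
    (hsym2 : ∀ p q r s, W p q r s = W p r q s)
    (hsym3 : ∀ p q r s, W p q r s = W p q s r)
    (δ₀ : ℝ)
    (i j : Fin n) (hi : (i : ℕ) = 0) (hj : (j : ℕ) = 1)
    (h : ℝ → ℝ)
    (hh : ∀ θ, h θ = ∑ t, (∑ p, ∑ q, ∑ r, ∑ s, W p q r s *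
      givens i j θ p t * givens i j θ q t * givens i j θ r t * givens i j θ s t) ^ 2)
    (τ : ℝ → ℝ)
    (hτ : ∀ x, τ x = h (Real.arctan x) - 2 * δ₀ * x ^ 2 / (1 + x ^ 2) ^ 2)
    (a b c d e : ℝ)
    (ha : a = 8 * (W i i i i * W i i i j - W i j j j * W j j j j))
    (hb : b = 8 * ((W i i i i) ^ 2 - 3 * W i i j j * W i i i i - 4 * (W i i i j) ^ 2
      - 4 * (W i j j j) ^ 2 + (W j j j j) ^ 2 - 3 * W i i j j * W j j j j) + 4 * δ₀)
    (hc : c = 8 * (18 * W i i i j * W i i j j - 7 * W i i i i * W i i i j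
      + 3 * W i i i i * W i j j j - 18 * W i i j j * W i j j j
      - 3 * W i i i j * W j j j j + 7 * W i j j j * W j j j j))
    (hd : d = 8 * (9 * W i i i i * W i i j j - 32 * W i i i j * W i j j j
      - 2 * W i i i i * W j j j j + 9 * W i i j j * W j j j j
      + 12 * (W i i i j) ^ 2 - 36 * (W i i j j) ^ 2 + 12 * (W i j j j) ^ 2) + 4 * δ₀)
    (he : e = 80 * (6 * W i i j j * W i j j j - W i i i i * W i j j j
      - 6 * W i i i j * W i i j j + W i i i j * W j j j j)) :
    (∀ x : ℝ, (1 + x ^ 2) ^ 5 * deriv τ x =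
      a * (x ^ 8 + 1) + b * (x ^ 7 - x) + c * (x ^ 6 + x ^ 2) + d * (x ^ 5 - x ^ 3) + e * x ^ 4) ∧
    (∀ x : ℝ, x ≠ 0 →
      a * (x ^ 8 + 1) + b * (x ^ 7 - x) + c * (x ^ 6 + x ^ 2) + d * (x ^ 5 - x ^ 3) + e * x ^ 4 =
        x ^ 4 * (a * (x - 1 / x) ^ 4 + b * (x - 1 / x) ^ 3 + (4 * a + c) * (x - 1 / x) ^ 2
          + (3 * b + d) * (x - 1 / x) + 2 * a + 2 * c + e)) := by

  have hij : i ≠ j := by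
    intro hEq; rw [hEq, hj] at hi; exact absurd hi (by norm_num)
  have hji : j ≠ i := hij.symm
  -- column entries of the Givens rotation
  have cII : ∀ θ, givens i j θ i i = Real.cos θ := fun θ => by simp [givens]
  have cJI : ∀ θ, givens i j θ j i = Real.sin θ := fun θ => by simp [givens, hji, hij]
  have cOI : ∀ θ (p : Fin n), p ≠ i → p ≠ j → givens i j θ p i = 0 := fun θ p h1 h2 => by
    simp [givens, h1, h2, hij, hji]
  have cIJ : ∀ θ, givens i j θ i j = -Real.sin θ := fun θ => by simp [givens, hij, hji]
  have cJJ : ∀ θ, givens i j θ j j = Real.cos θ := fun θ => by simp [givens, hji, hij]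
  have cOJ : ∀ θ (p : Fin n), p ≠ i → p ≠ j → givens i j θ p j = 0 := fun θ p h1 h2 => by
    simp [givens, h1, h2, hij, hji]
  have cT : ∀ θ (t : Fin n), t ≠ i → t ≠ j → ∀ p, givens i j θ p t
      = if p = t then (1:ℝ) else 0 := fun θ t h1 h2 p => by
    simp [givens, h1, h2]
  -- shrinking sums to {i, j}
  have step : ∀ (f : Fin n → ℝ), (∀ p, p ≠ i → p ≠ j → f p = 0) →
      ∑ p, f p = ∑ p ∈ ({i, j} : Finset (Fin n)), f p := by
    intro f hf
    refine (Finset.sum_subset (Finset.subset_univ _) fun x _ hx => ?_).symm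
    simp only [Finset.mem_insert, Finset.mem_singleton] at hx
    push_neg at hx
    exact hf x hx.1 hx.2
  -- symmetry normalisation
  have e1 : W i i j i = W i i i j := by rw [hsym3]
  have e2 : W i j i i = W i i i j := by rw [hsym2, hsym3]
  have e3 : W j i i i = W i i i j := by rw [hsym1, hsym2, hsym3]
  have f1 : W i j i j = W i i j j := by rw [hsym2]
  have f2 : W i j j i = W i i j j := by rw [hsym3, hsym2]
  have f3 : W j i i j = W i i j j := by rw [hsym1, hsym2]
  have f4 : W j i j i = W i i j j := by rw [hsym1, hsym3, hsym2]
  have f5 : W j j i i = W i i j j := by rw [hsym2, hsym1, hsym3, hsym2]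
  have g1 : W j i j j = W i j j j := by rw [hsym1]
  have g2 : W j j i j = W i j j j := by rw [hsym2, hsym1]
  have g3 : W j j j i = W i j j j := by rw [hsym3, hsym2, hsym1]
  -- the quadruple sum against a column supported on {i, j}
  have expand : ∀ (v : Fin n → ℝ), (∀ p, p ≠ i → p ≠ j → v p = 0) →
      (∑ p, ∑ q, ∑ r, ∑ s, W p q r s * v p * v q * v r * v s)
      = W i i i i * v i ^ 4 + 4 * W i i i j * v i ^ 3 * v j
        + 6 * W i i j j * v i ^ 2 * v j ^ 2 + 4 * W i j j j * v i * v j ^ 3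
        + W j j j j * v j ^ 4 := by
    intro v hv
    have key : (∑ p, ∑ q, ∑ r, ∑ s, W p q r s * v p * v q * v r * v s)
        = ∑ p ∈ ({i, j} : Finset (Fin n)), ∑ q ∈ ({i, j} : Finset (Fin n)),
          ∑ r ∈ ({i, j} : Finset (Fin n)), ∑ s ∈ ({i, j} : Finset (Fin n)),
            W p q r s * v p * v q * v r * v s := by
      rw [step (fun p => ∑ q, ∑ r, ∑ s, W p q r s * v p * v q * v r * v s)
        (fun p h1 h2 => by simp [hv p h1 h2])]
      refine Finset.sum_congr rfl fun p _ => ?_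
      rw [step (fun q => ∑ r, ∑ s, W p q r s * v p * v q * v r * v s)
        (fun q h1 h2 => by simp [hv q h1 h2])]
      refine Finset.sum_congr rfl fun q _ => ?_
      rw [step (fun r => ∑ s, W p q r s * v p * v q * v r * v s)
        (fun r h1 h2 => by simp [hv r h1 h2])]
      refine Finset.sum_congr rfl fun r _ => ?_
      rw [step (fun s => W p q r s * v p * v q * v r * v s)
        (fun s h1 h2 => by simp [hv s h1 h2])]
    rw [key]
    simp only [Finset.sum_pair hij]
    rw [e1, e2, e3, f1, f2, f3, f4, f5, g1, g2, g3]
    ring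

  have expandI : ∀ θ, (∑ p, ∑ q, ∑ r, ∑ s, W p q r s * givens i j θ p i
      * givens i j θ q i * givens i j θ r i * givens i j θ s i)
      = W i i i i * Real.cos θ ^ 4 + 4 * W i i i j * Real.cos θ ^ 3 * Real.sin θ
        + 6 * W i i j j * Real.cos θ ^ 2 * Real.sin θ ^ 2
        + 4 * W i j j j * Real.cos θ * Real.sin θ ^ 3 + W j j j j * Real.sin θ ^ 4 := by
    intro θ
    have h := expand (fun p => givens i j θ p i) (cOI θ)
    beta_reduce at h
    rw [h, cII, cJI]
  have expandJ : ∀ θ, (∑ p, ∑ q, ∑ r, ∑ s, W p q r s * givens i j θ p j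
      * givens i j θ q j * givens i j θ r j * givens i j θ s j)
      = W i i i i * Real.sin θ ^ 4 - 4 * W i i i j * Real.sin θ ^ 3 * Real.cos θ
        + 6 * W i i j j * Real.sin θ ^ 2 * Real.cos θ ^ 2
        - 4 * W i j j j * Real.sin θ * Real.cos θ ^ 3 + W j j j j * Real.cos θ ^ 4 := by
    intro θ
    have h := expand (fun p => givens i j θ p j) (cOJ θ)
    beta_reduce at h
    rw [h, cIJ, cJJ]
    ring
  have expandT : ∀ θ (t : Fin n), t ≠ i → t ≠ j →
      (∑ p, ∑ q, ∑ r, ∑ s, W p q r s * givens i j θ p t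
      * givens i j θ q t * givens i j θ r t * givens i j θ s t) = W t t t t := by
    intro θ t h1 h2
    simp only [cT θ t h1 h2, mul_ite, mul_one, mul_zero, ite_mul, zero_mul,
      Finset.sum_ite_eq', Finset.mem_univ, if_true]
  set CC : ℝ := ∑ t ∈ Finset.univ \ ({i, j} : Finset (Fin n)), (W t t t t) ^ 2 with hCC
  have hkey : ∀ θ, h θ =
      (W i i i i * Real.cos θ ^ 4 + 4 * W i i i j * Real.cos θ ^ 3 * Real.sin θ
        + 6 * W i i j j * Real.cos θ ^ 2 * Real.sin θ ^ 2
        + 4 * W i j j j * Real.cos θ * Real.sin θ ^ 3 + W j j j j * Real.sin θ ^ 4) ^ 2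
      + (W i i i i * Real.sin θ ^ 4 - 4 * W i i i j * Real.sin θ ^ 3 * Real.cos θ
        + 6 * W i i j j * Real.sin θ ^ 2 * Real.cos θ ^ 2
        - 4 * W i j j j * Real.sin θ * Real.cos θ ^ 3 + W j j j j * Real.cos θ ^ 4) ^ 2
      + CC := by
    intro θ
    rw [hh]
    rw [← Finset.sum_sdiff (Finset.subset_univ ({i, j} : Finset (Fin n)))]
    have hconst : ∑ t ∈ Finset.univ \ ({i, j} : Finset (Fin n)),
        (∑ p, ∑ q, ∑ r, ∑ s, W p q r s * givens i j θ p t * givens i j θ q t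
          * givens i j θ r t * givens i j θ s t) ^ 2 = CC := by
      refine Finset.sum_congr rfl fun t ht => ?_
      simp only [Finset.mem_sdiff, Finset.mem_univ, Finset.mem_insert,
        Finset.mem_singleton, true_and] at ht
      push_neg at ht
      rw [expandT θ t ht.1 ht.2]
    rw [hconst, Finset.sum_pair hij, expandI θ, expandJ θ]
    ring

  have hτ2 : ∀ x : ℝ, τ x =
      ((W i i i i + 4 * W i i i j * x + 6 * W i i j j * x ^ 2 + 4 * W i j j j * x ^ 3
          + W j j j j * x ^ 4) ^ 2
        + (W j j j j - 4 * W i j j j * x + 6 * W i i j j * x ^ 2 - 4 * W i i i j * x ^ 3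
          + W i i i i * x ^ 4) ^ 2
        - 2 * δ₀ * x ^ 2 * (1 + x ^ 2) ^ 2) / (1 + x ^ 2) ^ 4 + CC := by
    intro x
    rw [hτ, hkey (Real.arctan x), Real.cos_arctan, Real.sin_arctan]
    set u := Real.sqrt (1 + x ^ 2) with hu
    have hu2 : u ^ 2 = 1 + x ^ 2 := Real.sq_sqrt (by positivity)
    have hu0 : u ≠ 0 := by rw [hu]; positivity
    rw [← hu2]
    field_simp
    ring

  constructor
  · intro x
    have hb2 : HasDerivAt (fun y : ℝ => 1 + y ^ 2) (2 * x) x := by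
      simpa using (hasDerivAt_pow 2 x).const_add 1
    have hP : HasDerivAt (fun y : ℝ => W i i i i + 4 * W i i i j * y + 6 * W i i j j * y ^ 2
        + 4 * W i j j j * y ^ 3 + W j j j j * y ^ 4)
        (4 * W i i i j + 12 * W i i j j * x + 12 * W i j j j * x ^ 2
          + 4 * W j j j j * x ^ 3) x := by
      have hch := ((((hasDerivAt_const x (W i i i i)).add
        ((hasDerivAt_id x).const_mul (4 * W i i i j))).add
        ((hasDerivAt_pow 2 x).const_mul (6 * W i i j j))).add
        ((hasDerivAt_pow 3 x).const_mul (4 * W i j j j))).add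
        ((hasDerivAt_pow 4 x).const_mul (W j j j j))
      exact hch.congr_deriv (by push_cast; ring)
    have hQ : HasDerivAt (fun y : ℝ => W j j j j - 4 * W i j j j * y + 6 * W i i j j * y ^ 2
        - 4 * W i i i j * y ^ 3 + W i i i i * y ^ 4)
        (-(4 * W i j j j) + 12 * W i i j j * x - 12 * W i i i j * x ^ 2
          + 4 * W i i i i * x ^ 3) x := by
      have hch := ((((hasDerivAt_const x (W j j j j)).sub
        ((hasDerivAt_id x).const_mul (4 * W i j j j))).add
        ((hasDerivAt_pow 2 x).const_mul (6 * W i i j j))).sub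
        ((hasDerivAt_pow 3 x).const_mul (4 * W i i i j))).add
        ((hasDerivAt_pow 4 x).const_mul (W i i i i))
      exact hch.congr_deriv (by push_cast; ring)
    have hδ := ((hasDerivAt_pow 2 x).const_mul (2 * δ₀)).mul (hb2.pow 2)
    have hN := ((hP.pow 2).add (hQ.pow 2)).sub hδ
    have hD := hb2.pow 4
    have hden : ((1 : ℝ) + x ^ 2) ^ 4 ≠ 0 := by positivity
    have hF := hN.div hD hden
    have hτd := (hF.add_const CC).congr_of_eventuallyEq (Filter.Eventually.of_forall hτ2)
    rw [hτd.deriv, ha, hb, hc, hd, he]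
    have hx2 : (1 : ℝ) + x ^ 2 ≠ 0 := by positivity
    push_cast
    norm_num only [Pi.pow_apply, Pi.add_apply, Pi.sub_apply, Pi.mul_apply, Pi.div_apply]
    field_simp
    ring
  · intro x hx
    have h4 : x ^ 4 ≠ 0 := pow_ne_zero 4 hx
    field_simp
    ring
end
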